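/- Let G = (C, S, E) be a finite bipartite graph with capacities κ : C → ℝ≥0 and τ : S → ℝ≥0, and let x be a maximal fractional (κ, τ)-matching, i.e., for every edge cs ∈ E either x(δ(c)) = κ(c) or x(δ(s)) = τ(s). Then for every fractional (κ, τ)-matching y of G, 2·x(E) ≥ y(E). -/
import Mathlib


/-- A fractional `(κ, τ)`-matching on the bipartite graph with edge set `E ⊆ C × S`. -/
def IsFracMatching {C S : Type*} [Fintype C] [Fintype S] [DecidableEq C] [DecidableEq S]
    (E : Finset (C × S)) (κ : C → ℝ) (τ : S → ℝ) (x : C × S → ℝ) : Prop :=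
  (∀ e, 0 ≤ x e) ∧
  (∀ c : C, ∑ e ∈ E.filter (fun e => e.1 = c), x e ≤ κ c) ∧
  (∀ s : S, ∑ e ∈ E.filter (fun e => e.2 = s), x e ≤ τ s)

/-- A maximal fractional `(κ, τ)`-matching is `2`-approximate:
for every fractional `(κ, τ)`-matching `y`, `2·x(E) ≥ y(E)`. -/
theorem stmt_8 {C S : Type*} [Fintype C] [Fintype S] [DecidableEq C] [DecidableEq S]
    (E : Finset (C × S)) (κ : C → ℝ) (hκ : ∀ c, 0 ≤ κ c) (τ : S → ℝ) (hτ : ∀ s, 0 ≤ τ s)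
    (x : C × S → ℝ)
    (hx : IsFracMatching E κ τ x)
    (hmaximal : ∀ e ∈ E,
      (∑ e' ∈ E.filter (fun e' => e'.1 = e.1), x e') = κ e.1 ∨
      (∑ e' ∈ E.filter (fun e' => e'.2 = e.2), x e') = τ e.2) :
    ∀ y : C × S → ℝ, IsFracMatching E κ τ y → ∑ e ∈ E, y e ≤ 2 * ∑ e ∈ E, x e := by
  classical
  intro y hy
  obtain ⟨hx0, hxc, hxs⟩ := hx
  obtain ⟨hy0, hyc, hys⟩ := hy
  set Csat : Finset C :=
    Finset.univ.filter (fun c : C => ∑ e' ∈ E.filter (fun e' => e'.1 = c), x e' = κ c) with hCdef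
  set Ssat : Finset S :=
    Finset.univ.filter (fun s : S => ∑ e' ∈ E.filter (fun e' => e'.2 = s), x e' = τ s) with hSdef
  have hxC : ∑ e ∈ E, x e = ∑ c : C, ∑ e ∈ E.filter (fun e => e.1 = c), x e :=
    (Finset.sum_fiberwise E (fun e => e.1) x).symm
  have hxS : ∑ e ∈ E, x e = ∑ s : S, ∑ e ∈ E.filter (fun e => e.2 = s), x e :=
    (Finset.sum_fiberwise E (fun e => e.2) x).symm
  have key1 : ∑ e ∈ E.filter (fun e => e.1 ∈ Csat), y e ≤ ∑ e ∈ E, x e := by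
    have h1 : ∑ c ∈ Csat, ∑ e ∈ E.filter (fun e => e.1 = c), y e
        = ∑ e ∈ E.filter (fun e => e.1 ∈ Csat), y e :=
      Finset.sum_fiberwise_eq_sum_filter E Csat (fun e => e.1) y
    rw [← h1, hxC]
    calc ∑ c ∈ Csat, ∑ e ∈ E.filter (fun e => e.1 = c), y e
        ≤ ∑ c ∈ Csat, κ c := Finset.sum_le_sum (fun c _ => hyc c)
      _ = ∑ c ∈ Csat, ∑ e ∈ E.filter (fun e => e.1 = c), x e := by
          apply Finset.sum_congr rfl
          intro c hc
          exact ((Finset.mem_filter.mp hc).2).symm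
      _ ≤ ∑ c : C, ∑ e ∈ E.filter (fun e => e.1 = c), x e := by
          apply Finset.sum_le_sum_of_subset_of_nonneg (Finset.subset_univ _)
          intro c _ _
          exact Finset.sum_nonneg (fun e _ => hx0 e)
  have key2 : ∑ e ∈ E.filter (fun e => e.2 ∈ Ssat), y e ≤ ∑ e ∈ E, x e := by
    have h1 : ∑ s ∈ Ssat, ∑ e ∈ E.filter (fun e => e.2 = s), y e
        = ∑ e ∈ E.filter (fun e => e.2 ∈ Ssat), y e :=
      Finset.sum_fiberwise_eq_sum_filter E Ssat (fun e => e.2) y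
    rw [← h1, hxS]
    calc ∑ s ∈ Ssat, ∑ e ∈ E.filter (fun e => e.2 = s), y e
        ≤ ∑ s ∈ Ssat, τ s := Finset.sum_le_sum (fun s _ => hys s)
      _ = ∑ s ∈ Ssat, ∑ e ∈ E.filter (fun e => e.2 = s), x e := by
          apply Finset.sum_congr rfl
          intro s hs
          exact ((Finset.mem_filter.mp hs).2).symm
      _ ≤ ∑ s : S, ∑ e ∈ E.filter (fun e => e.2 = s), x e := by
          apply Finset.sum_le_sum_of_subset_of_nonneg (Finset.subset_univ _)
          intro s _ _
          exact Finset.sum_nonneg (fun e _ => hx0 e)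
  have hsplit : ∑ e ∈ E, y e = ∑ e ∈ E.filter (fun e => e.1 ∈ Csat), y e
      + ∑ e ∈ E.filter (fun e => e.1 ∉ Csat), y e :=
    (Finset.sum_filter_add_sum_filter_not E _ y).symm
  have hsub : E.filter (fun e => e.1 ∉ Csat) ⊆ E.filter (fun e => e.2 ∈ Ssat) := by
    intro e he
    obtain ⟨heE, hnc⟩ := Finset.mem_filter.mp he
    refine Finset.mem_filter.mpr ⟨heE, ?_⟩
    rcases hmaximal e heE with h | h
    · exact absurd (Finset.mem_filter.mpr ⟨Finset.mem_univ e.1, h⟩ : e.1 ∈ Csat) hnc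
    · exact Finset.mem_filter.mpr ⟨Finset.mem_univ _, h⟩
  have key2' : ∑ e ∈ E.filter (fun e => e.1 ∉ Csat), y e ≤ ∑ e ∈ E, x e :=
    le_trans (Finset.sum_le_sum_of_subset_of_nonneg hsub (fun e _ _ => hy0 e)) key2
  rw [hsplit]
  linarith
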